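/- arXiv:2602.23107 — 2 statements merged into one kernel-verified Lean document; each statement's English description precedes it below -/
import Mathlib

section
/- Let R be a topological ring and let M be a locally compact Hausdorff topological left R-module which is finitely generated as an R-module. Then the Pontryagin dual of M has no small submodules: there exists a neighbourhood V of the trivial character in the Pontryagin dual of M such that the only character χ of M with χ^r ∈ V for every r ∈ R is the trivial character. -/
/-- For a topological module `M` over `R`, the character `χ^r : m ↦ χ (r • m)`. -/
noncomputable def charPow {R M : Type*} [Semiring R] [AddCommGroup M] [Module R M]
    [TopologicalSpace M] [ContinuousConstSMul R M] (r : R)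
    (χ : PontryaginDual (Multiplicative M)) : PontryaginDual (Multiplicative M) :=
  ContinuousMonoidHom.comp χ
    { toFun := fun m => Multiplicative.ofAdd (r • m.toAdd)
      map_one' := by simp
      map_mul' := fun x y => by simp [smul_add]
      continuous_toFun := show Continuous fun m : M => r • m from continuous_const_smul r }


open Real

lemma Circle.exp_pow (θ : ℝ) (n : ℕ) : Circle.exp θ ^ n = Circle.exp (n * θ) := by
  induction n with
  | zero => simp
  | succ k ih => rw [pow_succ, ih, ← Circle.exp_add, Nat.cast_succ]; ring_nf

lemma aux_abs_arg (z : Circle) (h : 0 < (z : ℂ).re) : |Complex.arg z| < π / 2 :=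
  Complex.abs_arg_lt_pi_div_two_iff.mpr (Or.inl h)

lemma aux_pos (z : Circle) (hθ : 0 < Complex.arg z)
    (h : ∀ n : ℕ, 0 < ((z ^ n : Circle) : ℂ).re) : False := by
  set θ := Complex.arg (z : ℂ) with hθdef
  have h1 : |θ| < π / 2 := by
    have h0 : 0 < (z : ℂ).re := by simpa using h 1
    exact aux_abs_arg z h0
  have hθlt : θ < π / 2 := lt_of_abs_lt h1
  set n : ℕ := ⌈(π / 2) / θ⌉₊ with hn
  have hle : π / 2 ≤ n * θ := by
    rw [← div_le_iff₀ hθ]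
    exact Nat.le_ceil _
  have hlt : (n : ℝ) * θ < π := by
    have h2 : (n : ℝ) < (π / 2) / θ + 1 := Nat.ceil_lt_add_one (by positivity)
    have := (mul_lt_mul_of_pos_right h2 hθ)
    rw [add_mul, div_mul_cancel₀ _ (ne_of_gt hθ), one_mul] at this
    linarith
  have hzn : (z : Circle) ^ n = Circle.exp (n * θ) := by
    conv_lhs => rw [← Circle.exp_arg z]
    rw [Circle.exp_pow]
  have harg : Complex.arg ((z ^ n : Circle) : ℂ) = n * θ := by
    rw [hzn]
    exact Circle.arg_exp (by nlinarith [pi_pos]) hlt.le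
  have := aux_abs_arg _ (h n)
  rw [harg] at this
  have := lt_of_abs_lt this
  linarith

lemma circle_eq_one (z : Circle) (h : ∀ n : ℕ, 0 < ((z ^ n : Circle) : ℂ).re) : z = 1 := by
  rcases lt_trichotomy (Complex.arg (z : ℂ)) 0 with hlt | heq | hgt
  · exfalso
    apply aux_pos z⁻¹
    · rw [Circle.coe_inv, Complex.arg_inv]
      rw [if_neg (by linarith [Real.pi_pos])]
      linarith
    · intro n
      have : ((z⁻¹ ^ n : Circle) : ℂ) = ((z ^ n : Circle) : ℂ)⁻¹ := by
        push_cast [inv_pow]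
        rfl
      rw [this, Complex.inv_re]
      have hpos := h n
      have hsq : Complex.normSq ((z ^ n : Circle) : ℂ) = 1 := by
        simp [Complex.normSq_eq_norm_sq, Circle.norm_coe]
      rw [hsq]
      simpa using hpos
  · rw [← Circle.exp_arg z, heq, Circle.exp_zero]
  · exact absurd (aux_pos z hgt h) not_false

/-- Let `R` be a topological ring and `M` a locally compact Hausdorff
topological `R`-module that is finitely generated over `R`. Then the Pontryagin dual of `M` has
no small submodules: there is a neighbourhood `V` of the trivial character such that the only
character `χ` with `χ^r ∈ V` for every `r ∈ R` is the trivial one. -/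
theorem stmt_13 (R M : Type*) [Ring R] [TopologicalSpace R] [IsTopologicalRing R]
    [AddCommGroup M] [Module R M] [TopologicalSpace M] [IsTopologicalAddGroup M]
    [ContinuousSMul R M] [LocallyCompactSpace M] [T2Space M] [Module.Finite R M] :
    ∃ V ∈ nhds (1 : PontryaginDual (Multiplicative M)),
      ∀ χ : PontryaginDual (Multiplicative M), (∀ r : R, charPow r χ ∈ V) → χ = 1 := by
  obtain ⟨S, hS⟩ : (⊤ : Submodule R M).FG := Module.Finite.fg_top
  set U : Set Circle := {z | 0 < (z : ℂ).re} with hU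
  have hUopen : IsOpen U :=
    isOpen_lt continuous_const (Complex.continuous_re.comp continuous_subtype_val)
  set K : Set (Multiplicative M) := Multiplicative.ofAdd '' (↑S : Set M) with hK
  have hKcomp : IsCompact K := (S.finite_toSet.image _).isCompact
  refine ⟨{χ : PontryaginDual (Multiplicative M) | Set.MapsTo ⇑χ K U}, ?_, ?_⟩
  · have hopen : IsOpen {χ : PontryaginDual (Multiplicative M) | Set.MapsTo ⇑χ K U} := by
      have h1 : IsOpen {f : C(Multiplicative M, Circle) | Set.MapsTo ⇑f K U} :=
        ContinuousMap.isOpen_setOf_mapsTo hKcomp hUopen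
      exact h1.preimage
        (ContinuousMonoidHom.isInducing_toContinuousMap (Multiplicative M) Circle).continuous
    refine hopen.mem_nhds ?_
    intro x _
    show (0 : ℝ) < ((1 : Circle) : ℂ).re
    simp
  · intro χ hχ
    have key : ∀ s ∈ S, ∀ r : R, χ (Multiplicative.ofAdd (r • s)) = 1 := by
      intro s hsS r
      apply circle_eq_one
      intro n
      have hmem := hχ (n • r) (Set.mem_image_of_mem _ (by exact_mod_cast hsS : s ∈ (↑S : Set M)))
      have heval : (charPow (n • r) χ) (Multiplicative.ofAdd s)
          = χ (Multiplicative.ofAdd ((n • r) • s)) := rfl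
      have hpow : χ (Multiplicative.ofAdd (r • s)) ^ n
          = χ (Multiplicative.ofAdd ((n • r) • s)) := by
        rw [← map_pow, smul_assoc, ofAdd_nsmul]
      rw [hpow, ← heval]
      exact hmem
    refine ContinuousMonoidHom.ext fun x => ?_
    obtain ⟨f, hf⟩ : ∃ f : M → R, ∑ i ∈ S, f i • i = x.toAdd :=
      (Submodule.mem_span_finset.mp (hS ▸ Submodule.mem_top)).imp fun _ h => h.2
    have : χ x = χ (Multiplicative.ofAdd (∑ i ∈ S, f i • i)) := by rw [hf]; rfl
    change χ x = (1 : Circle)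
    rw [this, ofAdd_sum, map_prod]
    exact Finset.prod_eq_one fun i hi => key i hi (f i)
end

section
/- Let Σ be a set of prime numbers, S the multiplicative submonoid of ℕ generated by Σ, and M a locally compact Hausdorff topological module over the discrete ring ℤ[S⁻¹]. Then M is compactly generated if and only if the Pontryagin dual of M has no small submodules; that is, there exists a compact subset K of M whose ℤ[S⁻¹]-submodule span is all of M if and only if there exists a neighbourhood V of the trivial character in the Pontryagin dual of M such that the only character χ of M with χ^r ∈ V for every r ∈ ℤ[S⁻¹] is the trivial character. -/
open Filter Set Pointwise

instance (p : Nat.Primes) : Fact (p : ℕ).Prime := ⟨p.2⟩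

/-- `ℤ[S⁻¹]`: the subring of `ℚ` generated by `ℤ` together with the inverses of the primes
in `P` (where `S` is the multiplicative submonoid of `ℕ` generated by `P`). -/
def zLoc (P : Set Nat.Primes) : Subring ℚ :=
  Subring.closure {x : ℚ | ∃ q ∈ P, x = ((q : ℕ) : ℚ)⁻¹}

/-- `ℤ[S⁻¹]`, regarded as a discrete topological ring. -/
def ZS (P : Set Nat.Primes) := ↥(zLoc P)

instance (P : Set Nat.Primes) : CommRing (ZS P) := inferInstanceAs (CommRing ↥(zLoc P))

instance (P : Set Nat.Primes) : TopologicalSpace (ZS P) := ⊥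

instance (P : Set Nat.Primes) : DiscreteTopology (ZS P) := ⟨rfl⟩

instance (P : Set Nat.Primes) : IsTopologicalRing (ZS P) where
  continuous_add := continuous_of_discreteTopology
  continuous_mul := continuous_of_discreteTopology
  continuous_neg := continuous_of_discreteTopology

/-- The inclusion `ℤ[S⁻¹] → ℚ`. -/
def ZSval (P : Set Nat.Primes) : ZS P →+* ℚ := (zLoc P).subtype


-- auxiliary lemmas
section helpers
open Real


/-- If every integer power of `z` on the circle has positive real part, then `z = 1`. -/
lemma circle_eq_one_of_pow_re_pos {z : Circle} (h : ∀ n : ℤ, 0 < ((z ^ n : Circle) : ℂ).re) :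
    z = 1 := by
  by_contra hz
  set θ := Complex.arg (z : ℂ) with hθdef
  have hzexp : Circle.exp θ = z := Circle.exp_arg z
  have hpow : ∀ n : ℤ, z ^ n = Circle.exp (n * θ) := by
    intro n
    have := map_zsmul Circle.expHom n θ
    simp only [Circle.expHom_apply, Function.comp_apply] at this
    have h2 : Additive.ofMul (Circle.exp ((n : ℝ) * θ)) = Additive.ofMul (Circle.exp θ ^ n) := by
      rw [← zsmul_eq_mul, this]; rfl
    rw [← hzexp]
    exact (Additive.ofMul.injective h2).symm
  have hre : ∀ n : ℤ, ((z ^ n : Circle) : ℂ).re = Real.cos (n * θ) := by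
    intro n
    rw [hpow n, Circle.coe_exp, Complex.exp_ofReal_mul_I_re]
  have hθ0 : θ ≠ 0 := by
    intro h0
    apply hz
    rw [← hzexp, h0, Circle.exp_zero]
  have hθpi : |θ| ≤ π := abs_le.2 ⟨(Complex.neg_pi_lt_arg _).le, Complex.arg_le_pi _⟩
  have habs : 0 < |θ| := abs_pos.2 hθ0
  -- find n with π/2 ≤ n * |θ| ≤ 3π/2
  obtain ⟨n, hn1, hn2⟩ : ∃ n : ℕ, π / 2 ≤ n * |θ| ∧ n * |θ| ≤ π + π / 2 := by
    rcases le_or_gt (π / 2) |θ| with hc | hc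
    · exact ⟨1, by simpa using hc, by push_cast; nlinarith [Real.pi_pos]⟩
    · refine ⟨⌈(π / 2) / |θ|⌉₊, ?_, ?_⟩
      · rw [← div_le_iff₀ habs]
        exact Nat.le_ceil _
      · have h1 : (⌈(π / 2) / |θ|⌉₊ : ℝ) < (π / 2) / |θ| + 1 :=
          Nat.ceil_lt_add_one (by positivity)
        have := (mul_lt_mul_of_pos_right h1 habs)
        rw [add_mul, div_mul_cancel₀ _ habs.ne'] at this
        nlinarith [Real.pi_pos]
  set m : ℤ := if 0 ≤ θ then (n : ℤ) else -(n : ℤ) with hm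
  have hmθ : (m : ℝ) * θ = n * |θ| := by
    rcases le_or_gt 0 θ with h0 | h0
    · rw [hm, if_pos h0, abs_of_nonneg h0]; push_cast; ring
    · rw [hm, if_neg (not_le.2 h0), abs_of_neg h0]; push_cast; ring
  have := h m
  rw [hre m, hmθ] at this
  have hcos : Real.cos ((n : ℝ) * |θ|) ≤ 0 :=
    Real.cos_nonpos_of_pi_div_two_le_of_le hn1 hn2
  linarith


/-- The additive hom `ℚ →+ Additive Circle`, `q ↦ exp (2πq)`. -/
noncomputable def ratExpHom : ℚ →+ Additive Circle :=
  Circle.expHom.comp ((2 * π) • (Rat.castHom ℝ).toAddMonoidHom)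

lemma ratExpHom_apply (q : ℚ) : (ratExpHom q).toMul = Circle.exp (2 * π * q) := rfl

/-- The injective additive hom `AddCircle (1:ℚ) →+ Additive Circle`. -/
noncomputable def circleE : AddCircle (1 : ℚ) →+ Additive Circle :=
  QuotientAddGroup.lift _ ratExpHom (by
    intro x hx
    obtain ⟨n, rfl⟩ := AddSubgroup.mem_zmultiples_iff.1 hx
    show Additive.ofMul (Circle.exp (2 * π * ((n • (1:ℚ) : ℚ) : ℝ))) = 0
    have : ((n • (1:ℚ) : ℚ) : ℝ) = (n : ℝ) := by rw [zsmul_eq_mul, mul_one]; exact Rat.cast_intCast n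
    rw [this, Circle.exp_two_pi_mul_int]
    rfl)

lemma circleE_mk (q : ℚ) : (circleE ((q : AddCircle (1 : ℚ)))).toMul = Circle.exp (2 * π * q) := rfl

lemma circleE_eq_zero {x : AddCircle (1 : ℚ)} (h : (circleE x).toMul = 1) : x = 0 := by
  induction x using QuotientAddGroup.induction_on with
  | H q =>
    rw [circleE_mk, Circle.exp_eq_one] at h
    obtain ⟨n, hn⟩ := h
    have hq : (q : ℝ) = (n : ℝ) := by
      have hpi := Real.pi_pos
      nlinarith [hn]
    have : q = (n : ℚ) := by exact_mod_cast hq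
    subst this
    rw [show ((n : ℚ) : AddCircle (1:ℚ)) = 0 from ?_]
    rw [QuotientAddGroup.eq_zero_iff]
    exact AddSubgroup.mem_zmultiples_iff.2 ⟨n, by simp⟩
end helpers

/-- A locally compact Hausdorff topological module `M` over the discrete ring
`ℤ[S⁻¹]` is compactly generated if and only if its Pontryagin dual has no small submodules:
some compact subset of `M` spans `M` over `ℤ[S⁻¹]` iff there is a neighbourhood `V` of the
trivial character such that the only character `χ` with `χ^r ∈ V` for all `r ∈ ℤ[S⁻¹]` is
trivial. -/
theorem stmt_18 (P : Set Nat.Primes) (M : Type*) [AddCommGroup M] [Module (ZS P) M]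
    [TopologicalSpace M] [IsTopologicalAddGroup M] [ContinuousSMul (ZS P) M]
    [LocallyCompactSpace M] [T2Space M] :
    (∃ K : Set M, IsCompact K ∧ Submodule.span (ZS P) K = ⊤) ↔
      (∃ V ∈ nhds (1 : PontryaginDual (Multiplicative M)),
        ∀ χ : PontryaginDual (Multiplicative M), (∀ r : ZS P, charPow r χ ∈ V) → χ = 1) := by

  constructor
  · rintro ⟨K, hK, hspan⟩
    set W : Set Circle := {z : Circle | 0 < ((z : ℂ)).re} with hW
    have hWopen : IsOpen W :=
      isOpen_lt continuous_const (Complex.continuous_re.comp continuous_subtype_val)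
    have h1W : (1 : Circle) ∈ W := by simp [hW]
    set Km : Set (Multiplicative M) := Multiplicative.ofAdd '' K with hKm
    have hKmc : IsCompact Km := hK.image continuous_ofAdd
    refine ⟨ContinuousMonoidHom.toContinuousMap ⁻¹'
        {f : C(Multiplicative M, Circle) | Set.MapsTo f Km W}, ?_, ?_⟩
    · refine IsOpen.mem_nhds ?_ ?_
      · exact (ContinuousMap.isOpen_setOf_mapsTo hKmc hWopen).preimage
          (ContinuousMonoidHom.isInducing_toContinuousMap _ _).continuous
      · intro x _
        exact h1W
    · intro χ hχ
      have key : ∀ (r : ZS P), ∀ k ∈ K, χ (Multiplicative.ofAdd (r • k)) = 1 := by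
        intro r k hk
        apply circle_eq_one_of_pow_re_pos
        intro n
        have h1 : χ (Multiplicative.ofAdd (r • k)) ^ n
            = (charPow (n • r) χ) (Multiplicative.ofAdd k) := by
          show _ = χ (Multiplicative.ofAdd ((n • r) • (Multiplicative.ofAdd k).toAdd))
          rw [toAdd_ofAdd, smul_assoc, ofAdd_zsmul, map_zpow]
        rw [h1]
        exact hχ (n • r) ⟨k, hk, rfl⟩
      set N' : Submodule (ZS P) M :=
        { carrier := {m | ∀ r : ZS P, χ (Multiplicative.ofAdd (r • m)) = 1}
          add_mem' := fun {a b} ha hb r => by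
            rw [smul_add, ofAdd_add, map_mul, ha r, hb r, one_mul]
          zero_mem' := fun r => by rw [smul_zero, ofAdd_zero, map_one]
          smul_mem' := fun s m hm r => by rw [smul_smul]; exact hm (r * s) } with hN'
      have hle : Submodule.span (ZS P) K ≤ N' := Submodule.span_le.2 (fun k hk r => key r k hk)
      rw [hspan, top_le_iff] at hle
      refine ContinuousMonoidHom.ext fun x => ?_
      have := (hle.symm ▸ Submodule.mem_top : x.toAdd ∈ N') 1
      rw [one_smul, ofAdd_toAdd] at this
      exact this
  · rintro ⟨V, hV, hV1⟩
    have hind := ContinuousMonoidHom.isInducing_toContinuousMap (Multiplicative M) Circle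
    replace hV : (V : Set (ContinuousMonoidHom (Multiplicative M) Circle)) ∈ nhds (1 : ContinuousMonoidHom (Multiplicative M) Circle) := hV
    rw [hind.nhds_eq_comap] at hV
    obtain ⟨O, hO, hOV⟩ := Filter.mem_comap.1 hV
    have hb := nhds_basis_uniformity'
      (ContinuousMap.hasBasis_compactConvergenceUniformity (α := Multiplicative M) (β := Circle))
      (x := ContinuousMonoidHom.toContinuousMap (1 : PontryaginDual (Multiplicative M)))
    obtain ⟨⟨K₀, U⟩, ⟨hK₀, hU⟩, hball⟩ := hb.mem_iff.1 hO
    have claim : ∀ χ : PontryaginDual (Multiplicative M), (∀ x ∈ K₀, χ x = 1) → χ ∈ V := by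
      intro χ h
      apply hOV
      refine Set.mem_preimage.2 (hball ?_)
      simp only [UniformSpace.ball, Set.mem_preimage, Set.mem_setOf_eq]
      intro t ht
      have h1 : (ContinuousMonoidHom.toContinuousMap
          (1 : PontryaginDual (Multiplicative M))) t = 1 := rfl
      have h2 : (ContinuousMonoidHom.toContinuousMap χ) t = 1 := h t ht
      rw [h1, h2]
      exact refl_mem_uniformity hU
    obtain ⟨U₀, hU₀c, hU₀⟩ := exists_compact_mem_nhds (0 : M)
    set Kt : Set M := (Multiplicative.toAdd '' K₀) ∪ U₀ with hKt
    have hKtc : IsCompact Kt := (hK₀.image continuous_toAdd).union hU₀c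
    refine ⟨Kt, hKtc, ?_⟩
    by_contra hne
    obtain ⟨m₀, hm₀⟩ : ∃ m : M, m ∉ Submodule.span (ZS P) Kt := by
      by_contra h; push_neg at h; exact hne (Submodule.eq_top_iff'.2 h)
    set N := Submodule.span (ZS P) Kt with hN
    have hNopen : IsOpen (N : Set M) :=
      AddSubgroup.isOpen_of_mem_nhds N.toAddSubgroup
        (Filter.mem_of_superset hU₀ (fun x hx => Submodule.subset_span (Or.inr hx)))
    have hm0 : (Submodule.Quotient.mk m₀ : M ⧸ N) ≠ 0 :=
      fun h => hm₀ ((Submodule.Quotient.mk_eq_zero N).1 h)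
    obtain ⟨c, hc⟩ := CharacterModule.exists_character_apply_ne_zero_of_ne_zero hm0
    set f : M → Circle := fun m => (circleE (c (Submodule.Quotient.mk m))).toMul with hf
    have hf1 : ∀ m ∈ N, f m = 1 := by
      intro m hm
      rw [hf]; dsimp only
      rw [(Submodule.Quotient.mk_eq_zero N).2 hm, map_zero, map_zero]; rfl
    have hfadd : ∀ a b : M, f (a + b) = f a * f b := by
      intro a b
      rw [hf]; dsimp only
      rw [show (Submodule.Quotient.mk (a + b) : M ⧸ N)
          = Submodule.Quotient.mk a + Submodule.Quotient.mk b from rfl, map_add, map_add]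
      rfl
    have hcont : Continuous f := by
      rw [continuous_iff_continuousAt]
      intro x
      have hmem : {y : M | y - x ∈ N} ∈ nhds x := by
        have ho : IsOpen {y : M | y - x ∈ N} :=
          hNopen.preimage (continuous_id.sub continuous_const)
        exact ho.mem_nhds (by simp [N.zero_mem])
      refine Filter.EventuallyEq.continuousAt (y := f x) ?_
      filter_upwards [hmem] with y hy
      have hmk : (Submodule.Quotient.mk y : M ⧸ N) = Submodule.Quotient.mk x :=
        (Submodule.Quotient.eq N).2 hy
      rw [hf]; dsimp only; rw [hmk]
    set χ : PontryaginDual (Multiplicative M) :=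
      { toFun := fun x => f x.toAdd
        map_one' := hf1 0 N.zero_mem
        map_mul' := fun x y => hfadd x.toAdd y.toAdd
        continuous_toFun := hcont.comp continuous_toAdd } with hχdef
    have hχ1 : χ = 1 := by
      apply hV1 χ
      intro r
      apply claim
      intro x hx
      show f (r • x.toAdd) = 1
      exact hf1 _ (N.smul_mem r (Submodule.subset_span (Or.inl ⟨x, hx, rfl⟩)))
    have hone : χ (Multiplicative.ofAdd m₀) = 1 := by rw [hχ1]; rfl
    have hfm : f m₀ = 1 := hone
    exact hc (circleE_eq_zero hfm)
end
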